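/- Let Σ_x and Σ̃_e be m × m real symmetric positive definite matrices with all diagonal entries equal to 1. Let B = diag(b₁, …, b_m) and L = diag(l₁, …, l_m) be diagonal matrices with entries in [−1, 1] satisfying B² + L² = I. Then J(B, L) = 0 if and only if L Σ̃_e B = B Σ_x L. -/

import Mathlib

open Matrix

lemma auxA {n : Type*} [Fintype n] [DecidableEq n] {Q : Matrix n n ℝ}
    (hQ : Q.PosSemidef) (h : (1 + Q).det = 1) : Q = 0 := by
  have hH := hQ.1
  have hspec : Q = (hH.eigenvectorUnitary : Matrix n n ℝ)
      * Matrix.diagonal ((RCLike.ofReal ∘ hH.eigenvalues : n → ℝ))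
      * star (hH.eigenvectorUnitary : Matrix n n ℝ) := hH.spectral_theorem
  set U := (hH.eigenvectorUnitary : Matrix n n ℝ) with hUdef
  have hU1 : U * star U = 1 := Unitary.mul_star_self_of_mem hH.eigenvectorUnitary.2
  set D := Matrix.diagonal ((RCLike.ofReal ∘ hH.eigenvalues : n → ℝ)) with hDdef
  have h2 : 1 + Q = U * (1 + D) * star U := by
    rw [Matrix.mul_add, Matrix.add_mul, Matrix.mul_one, hU1, ← hspec]
  have hdetU : U.det * (star U).det = 1 := by
    rw [← Matrix.det_mul, hU1, Matrix.det_one]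
  have h3 : (1 + D).det = 1 := by
    have : (1 + Q).det = (1 + D).det * (U.det * (star U).det) := by
      rw [h2, Matrix.det_mul, Matrix.det_mul]; ring
    rw [hdetU, mul_one] at this
    rw [← this, h]
  have h4 : ∀ i, hH.eigenvalues i = 0 := by
    have hprod : ∏ i, (1 + hH.eigenvalues i) = 1 := by
      have : (1 : Matrix n n ℝ) + D = Matrix.diagonal (fun i => 1 + hH.eigenvalues i) := by
        rw [hDdef, ← Matrix.diagonal_one, Matrix.diagonal_add]
        congr 1
      rw [this, Matrix.det_diagonal] at h3
      exact h3
    have hle : ∀ i ∈ Finset.univ, (1:ℝ) ≤ 1 + hH.eigenvalues i := fun i _ =>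
      le_add_of_nonneg_right (hQ.eigenvalues_nonneg i)
    intro i
    by_contra hne
    have h6 := hQ.eigenvalues_nonneg i
    have hstrict : (∏ _j : n, (1:ℝ)) < ∏ j, (1 + hH.eigenvalues j) := by
      refine Finset.prod_lt_prod (fun j _ => one_pos) hle ⟨i, Finset.mem_univ i, ?_⟩
      have : 0 < hH.eigenvalues i := lt_of_le_of_ne h6 (Ne.symm hne)
      linarith
    rw [Finset.prod_const_one, hprod] at hstrict
    exact lt_irrefl _ hstrict
  have hD0 : D = 0 := by
    rw [hDdef]
    ext i j
    by_cases hij : i = j <;> simp [Matrix.diagonal, hij, h4]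
  rw [hspec, hD0, Matrix.mul_zero, Matrix.zero_mul]


open scoped MatrixOrder in
lemma auxB {n : Type*} [Fintype n] [DecidableEq n] {R P : Matrix n n ℝ}
    (hR : R.PosDef) (hP : P.PosSemidef) (h : (R + P).det = R.det) : P = 0 := by
  set T := CFC.sqrt R with hTdef
  have hT : T.PosSemidef := (CFC.sqrt_nonneg R).posSemidef
  have hTT : T * T = R := CFC.sqrt_mul_sqrt_self R hR.posSemidef.nonneg
  have hdetR : 0 < R.det := hR.det_pos
  have hdetT : T.det ≠ 0 := by
    intro h0
    rw [← hTT, Matrix.det_mul, h0, mul_zero] at hdetR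
    exact lt_irrefl _ hdetR
  have hTinv : T * T⁻¹ = 1 := Matrix.mul_nonsing_inv T (isUnit_iff_ne_zero.mpr hdetT)
  have hTinv' : T⁻¹ * T = 1 := Matrix.nonsing_inv_mul T (isUnit_iff_ne_zero.mpr hdetT)
  set Q := T⁻¹ * P * T⁻¹ with hQdef
  have hQ : Q.PosSemidef := by
    have := hP.conjTranspose_mul_mul_same T⁻¹
    rwa [Matrix.conjTranspose_nonsing_inv, hT.1.eq] at this
  have hPQ : P = T * Q * T := by
    rw [hQdef]
    calc P = (T * T⁻¹) * P * (T⁻¹ * T) := by rw [hTinv, hTinv', Matrix.one_mul, Matrix.mul_one]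
    _ = T * (T⁻¹ * P * T⁻¹) * T := by noncomm_ring
  have hRP : R + P = T * (1 + Q) * T := by
    rw [Matrix.mul_add, Matrix.add_mul, Matrix.mul_one, hTT, ← hPQ]
  have hdet1 : (1 + Q).det = 1 := by
    have h1 : T.det * (1 + Q).det * T.det = T.det * T.det := by
      rw [← Matrix.det_mul, ← Matrix.det_mul, ← hRP, h, ← hTT, Matrix.det_mul]
    have h2 : T.det * T.det * (1 + Q).det = T.det * T.det * 1 := by ring_nf; ring_nf at h1; linarith
    exact mul_left_cancel₀ (mul_ne_zero hdetT hdetT) h2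
  have hQ0 : Q = 0 := auxA hQ hdet1
  rw [hPQ, hQ0, Matrix.mul_zero, Matrix.zero_mul]

lemma auxC {n : Type*} [Fintype n] [DecidableEq n] {M C : Matrix n n ℝ}
    (hM : M.PosDef) (h : Cᴴ * M⁻¹ * C = 0) : C = 0 := by
  have hMinv : M⁻¹.PosDef := hM.inv
  have hdet : IsUnit M.det := isUnit_iff_ne_zero.mpr hM.det_pos.ne'
  ext i j
  have hy : (Cᴴ * M⁻¹ * C) *ᵥ Pi.single j 1 = 0 := by rw [h, Matrix.zero_mulVec]
  have hquad : star (C *ᵥ Pi.single j 1) ⬝ᵥ (M⁻¹ *ᵥ (C *ᵥ Pi.single j 1)) = 0 := by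
    have : star (Pi.single j 1 : n → ℝ) ⬝ᵥ ((Cᴴ * M⁻¹ * C) *ᵥ Pi.single j 1) = 0 := by
      rw [hy, dotProduct_zero]
    rw [← this]
    simp only [← Matrix.mulVec_mulVec, Matrix.dotProduct_mulVec, Matrix.star_mulVec,
      Matrix.conjTranspose_conjTranspose]
  have hv0 : M⁻¹ *ᵥ (C *ᵥ Pi.single j 1) = 0 :=
    (hMinv.posSemidef.dotProduct_mulVec_zero_iff _).mp hquad
  have : C *ᵥ Pi.single j 1 = 0 := by
    have := congrArg (fun v => M *ᵥ v) hv0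
    simpa [Matrix.mulVec_mulVec, Matrix.mul_nonsing_inv M hdet] using this
  have := congrFun this i
  simpa using this

lemma posDefConj {n : Type*} [Fintype n] [DecidableEq n] {S U : Matrix n n ℝ}
    (hS : S.PosDef) (hU : IsUnit U.det) : (U * S * Uᴴ).PosDef := by
  refine Matrix.PosDef.of_dotProduct_mulVec_pos ?_ ?_
  · have : (U * S * Uᴴ)ᴴ = U * Sᴴ * Uᴴ := by
      simp [Matrix.conjTranspose_mul, Matrix.mul_assoc]
    rw [IsHermitian, this, hS.1.eq]
  · intro x hx
    have hx' : Uᴴ *ᵥ x ≠ 0 := by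
      intro h0
      apply hx
      have hUH : IsUnit (Uᴴ) := by
        rw [Matrix.isUnit_iff_isUnit_det, Matrix.det_conjTranspose, isUnit_iff_ne_zero,
          star_ne_zero, ← isUnit_iff_ne_zero]
        exact hU
      have := Matrix.mulVec_injective_iff_isUnit.mpr hUH
      exact this (by rw [h0, Matrix.mulVec_zero])
    have := hS.dotProduct_mulVec_pos hx'
    simpa only [← Matrix.mulVec_mulVec, Matrix.dotProduct_mulVec, Matrix.star_mulVec,
      Matrix.conjTranspose_conjTranspose, Matrix.vecMul_vecMul] using this

lemma quadConj {n : Type*} [Fintype n] [DecidableEq n] (A : Matrix n n ℝ) (d : n → ℝ)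
    (x : n → ℝ) :
    star x ⬝ᵥ ((diagonal d * A * diagonal d) *ᵥ x)
      = star (diagonal d *ᵥ x) ⬝ᵥ (A *ᵥ (diagonal d *ᵥ x)) := by
  simp only [← Matrix.mulVec_mulVec, Matrix.dotProduct_mulVec, Matrix.star_mulVec,
    Matrix.diagonal_conjTranspose, Pi.star_def, star_trivial]
  rw [show (diagonal d *ᵥ x) = x ᵥ* diagonal d from by
    rw [← Matrix.diagonal_transpose d, Matrix.mulVec_transpose, Matrix.diagonal_transpose]]

lemma auxM {n : Type*} [Fintype n] [DecidableEq n] {Sx Se : Matrix n n ℝ}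
    (hx : Sx.PosDef) (he : Se.PosDef) (b l : n → ℝ)
    (hbl : ∀ i, b i ^ 2 + l i ^ 2 = 1) :
    (diagonal b * Sx * diagonal b + diagonal l * Se * diagonal l).PosDef := by
  refine Matrix.PosDef.of_dotProduct_mulVec_pos ?_ ?_
  · simp only [Matrix.IsHermitian, Matrix.conjTranspose_add, Matrix.conjTranspose_mul,
      Matrix.diagonal_conjTranspose, Pi.star_def, star_trivial, hx.1.eq, he.1.eq,
      Matrix.mul_assoc]
  · intro x hx0
    rw [Matrix.add_mulVec, dotProduct_add, quadConj, quadConj]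
    have hnb : ¬ (diagonal b *ᵥ x = 0 ∧ diagonal l *ᵥ x = 0) := by
      rintro ⟨h1, h2⟩
      obtain ⟨i, hi⟩ := Function.ne_iff.mp hx0
      have hb0 : b i * x i = 0 := by
        have := congrFun h1 i; simpa [Matrix.mulVec_diagonal] using this
      have hl0 : l i * x i = 0 := by
        have := congrFun h2 i; simpa [Matrix.mulVec_diagonal] using this
      have hbi : b i = 0 := by
        rcases mul_eq_zero.mp hb0 with h | h
        · exact h
        · exact absurd h hi
      have hli : l i = 0 := by
        rcases mul_eq_zero.mp hl0 with h | h
        · exact h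
        · exact absurd h hi
      have := hbl i
      rw [hbi, hli] at this
      norm_num at this
    by_cases hB : diagonal b *ᵥ x = 0
    · have hL : diagonal l *ᵥ x ≠ 0 := fun h => hnb ⟨hB, h⟩
      have h1 : (0:ℝ) ≤ star (diagonal b *ᵥ x) ⬝ᵥ (Sx *ᵥ (diagonal b *ᵥ x)) :=
        hx.posSemidef.dotProduct_mulVec_nonneg _
      have h2 := he.dotProduct_mulVec_pos hL
      linarith
    · have h1 := hx.dotProduct_mulVec_pos hB
      have h2 : (0:ℝ) ≤ star (diagonal l *ᵥ x) ⬝ᵥ (Se *ᵥ (diagonal l *ᵥ x)) :=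
        he.posSemidef.dotProduct_mulVec_nonneg _
      linarith

lemma auxS {n : Type*} [Fintype n] [DecidableEq n] {Sx Se : Matrix n n ℝ}
    (hx : Sx.PosDef) (he : Se.PosDef) :
    (fromBlocks Sx 0 0 Se).PosDef := by
  refine Matrix.PosDef.of_dotProduct_mulVec_pos ?_ ?_
  · simp only [Matrix.IsHermitian, Matrix.fromBlocks_conjTranspose, hx.1.eq, he.1.eq,
      Matrix.conjTranspose_zero]
  · intro x hx0
    have hx' : x = Sum.elim (x ∘ Sum.inl) (x ∘ Sum.inr) := (Sum.elim_comp_inl_inr x).symm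
    have key : star x ⬝ᵥ ((fromBlocks Sx 0 0 Se) *ᵥ x)
        = star (x ∘ Sum.inl) ⬝ᵥ (Sx *ᵥ (x ∘ Sum.inl))
          + star (x ∘ Sum.inr) ⬝ᵥ (Se *ᵥ (x ∘ Sum.inr)) := by
      conv_lhs => rw [hx']
      rw [Matrix.fromBlocks_mulVec]
      simp only [Matrix.zero_mulVec, add_zero, zero_add, Function.star_sumElim,
        Sum.elim_comp_inl, Sum.elim_comp_inr, Pi.star_def, star_trivial]
      rw [sumElim_dotProduct_sumElim]
    rw [key]
    have hor : (x ∘ Sum.inl) ≠ 0 ∨ (x ∘ Sum.inr) ≠ 0 := by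
      by_contra hcon
      push_neg at hcon
      apply hx0
      rw [hx', hcon.1, hcon.2]
      ext i
      cases i <;> simp
    rcases hor with h | h
    · have h1 := hx.dotProduct_mulVec_pos h
      have h2 : (0:ℝ) ≤ star (x ∘ Sum.inr) ⬝ᵥ (Se *ᵥ (x ∘ Sum.inr)) := he.posSemidef.dotProduct_mulVec_nonneg _
      linarith
    · have h1 : (0:ℝ) ≤ star (x ∘ Sum.inl) ⬝ᵥ (Sx *ᵥ (x ∘ Sum.inl)) := hx.posSemidef.dotProduct_mulVec_nonneg _
      have h2 := he.dotProduct_mulVec_pos h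
      linarith
theorem stmt3 {m : ℕ} (Sx Se : Matrix (Fin m) (Fin m) ℝ)
    (hx : Sx.PosDef) (he : Se.PosDef)
    (hxd : ∀ i, Sx i i = 1) (hed : ∀ i, Se i i = 1)
    (b l : Fin m → ℝ)
    (hb : ∀ i, b i ∈ Set.Icc (-1 : ℝ) 1) (hl : ∀ i, l i ∈ Set.Icc (-1 : ℝ) 1)
    (hbl : ∀ i, b i ^ 2 + l i ^ 2 = 1) :
    (- Real.log Sx.det - Real.log Se.det
      + Real.log (Matrix.diagonal b * Sx * Matrix.diagonal b
          + Matrix.diagonal l * Se * Matrix.diagonal l).det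
      + Real.log (Matrix.diagonal l * Sx * Matrix.diagonal l
          + Matrix.diagonal b * Se * Matrix.diagonal b).det) = 0
    ↔ Matrix.diagonal l * Se * Matrix.diagonal b
        = Matrix.diagonal b * Sx * Matrix.diagonal l := by
  set B := Matrix.diagonal b with hBdef
  set L := Matrix.diagonal l with hLdef
  set M := B * Sx * B + L * Se * L with hMdef
  set N := L * Sx * L + B * Se * B with hNdef
  set C := L * Se * B - B * Sx * L with hCdef
  have hM : M.PosDef := auxM hx he b l hbl
  have hN : N.PosDef := auxM hx he l b (fun i => by have := hbl i; linarith)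
  -- conjTranspose facts
  have hBH : Bᴴ = B := by
    rw [hBdef, Matrix.diagonal_conjTranspose]; congr 1
  have hLH : Lᴴ = L := by
    rw [hLdef, Matrix.diagonal_conjTranspose]; congr 1
  have hCH : Cᴴ = B * Se * L - L * Sx * B := by
    rw [hCdef, Matrix.conjTranspose_sub, Matrix.conjTranspose_mul, Matrix.conjTranspose_mul,
      Matrix.conjTranspose_mul, Matrix.conjTranspose_mul, hBH, hLH, hx.1.eq, he.1.eq,
      Matrix.mul_assoc, Matrix.mul_assoc]
  set U : Matrix (Fin m ⊕ Fin m) (Fin m ⊕ Fin m) ℝ := fromBlocks B L (-L) B with hUdef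
  set S : Matrix (Fin m ⊕ Fin m) (Fin m ⊕ Fin m) ℝ := fromBlocks Sx 0 0 Se with hSdef
  have hUH : Uᴴ = fromBlocks B (-L) L B := by
    rw [hUdef, Matrix.fromBlocks_conjTranspose, hBH, hLH, Matrix.conjTranspose_neg, hLH]
  -- U is orthogonal
  have hfun1 : (fun i => b i * b i + l i * l i) = fun _ : Fin m => (1:ℝ) := by
    funext i
    nlinarith [hbl i]
  have hBB : B * B + L * L = 1 := by
    rw [hBdef, hLdef, Matrix.diagonal_mul_diagonal, Matrix.diagonal_mul_diagonal,
      Matrix.diagonal_add, hfun1, Matrix.diagonal_one]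
  have hfun2 : (fun i => b i * l i) = fun i => l i * b i := by
    funext i
    ring
  have hBLcomm : B * L = L * B := by
    rw [hBdef, hLdef, Matrix.diagonal_mul_diagonal, Matrix.diagonal_mul_diagonal, hfun2]
  have hUUT : U * Uᴴ = 1 := by
    rw [hUH, hUdef, Matrix.fromBlocks_multiply]
    have h12 : B * -L + L * B = 0 := by rw [Matrix.mul_neg, hBLcomm]; abel
    have h21 : -L * B + B * L = 0 := by rw [Matrix.neg_mul, hBLcomm]; abel
    have h22 : -L * -L + B * B = 1 := by
      rw [Matrix.neg_mul, Matrix.mul_neg, neg_neg, add_comm]; exact hBB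
    rw [hBB, h12, h21, h22, Matrix.fromBlocks_one]
  have hdetU : U.det * Uᴴ.det = 1 := by
    rw [← Matrix.det_mul, hUUT, Matrix.det_one]
  have hUisUnit : IsUnit U.det := isUnit_of_mul_isUnit_left (by rw [hdetU]; exact isUnit_one)
  -- key block identity
  have hUS : U * S * Uᴴ = fromBlocks M C Cᴴ N := by
    rw [hCH, hUH, hUdef, hSdef, hMdef, hNdef, Matrix.fromBlocks_multiply,
      Matrix.fromBlocks_multiply]
    rw [Matrix.fromBlocks_inj]
    refine ⟨?_, ?_, ?_, ?_⟩
    · simp only [Matrix.mul_zero, Matrix.zero_mul, add_zero, zero_add]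
    · simp only [Matrix.mul_zero, Matrix.zero_mul, add_zero, zero_add, Matrix.mul_neg,
        Matrix.neg_mul]
      rw [neg_add_eq_sub]
    · simp only [Matrix.mul_zero, Matrix.zero_mul, add_zero, zero_add, Matrix.mul_neg,
        Matrix.neg_mul]
      rw [neg_add_eq_sub]
    · simp only [Matrix.mul_zero, Matrix.zero_mul, add_zero, zero_add, Matrix.mul_neg,
        Matrix.neg_mul, neg_neg]
  -- positive definiteness of the big matrix
  have hbig : (fromBlocks M C Cᴴ N).PosDef := by
    rw [← hUS]
    exact posDefConj (auxS hx he) hUisUnit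
  haveI : Invertible M := M.invertibleOfIsUnitDet (isUnit_iff_ne_zero.mpr hM.det_pos.ne')
  set P := Cᴴ * M⁻¹ * C with hPdef
  have hPpsd : P.PosSemidef := hM.inv.posSemidef.conjTranspose_mul_mul_same C
  have hSchurPSD : (N - P).PosSemidef := (PosDef.fromBlocks₁₁ C N hM).mp hbig.posSemidef
  have hSchurPD : (N - P).PosDef := by
    refine Matrix.PosDef.of_dotProduct_mulVec_pos hSchurPSD.1 (fun x hx0 => ?_)
    have hv : (Sum.elim (-((M⁻¹ * C) *ᵥ x)) x) ≠ 0 := by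
      intro h0
      exact hx0 (funext fun i => congrFun h0 (Sum.inr i))
    have hpos := hbig.dotProduct_mulVec_pos hv
    rw [dotProduct_mulVec, schur_complement_eq₁₁ C N _ _ hM.1, neg_add_cancel,
      dotProduct_zero, zero_add, ← dotProduct_mulVec] at hpos
    exact hpos
  -- determinant identity
  have hkey : Sx.det * Se.det = M.det * (N - P).det := by
    have h1 : (U * S * Uᴴ).det = Sx.det * Se.det := by
      rw [Matrix.det_mul, Matrix.det_mul, hSdef, Matrix.det_fromBlocks_zero₂₁]
      calc U.det * (Sx.det * Se.det) * Uᴴ.det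
          = (U.det * Uᴴ.det) * (Sx.det * Se.det) := by ring
        _ = Sx.det * Se.det := by rw [hdetU, one_mul]
    have h2 : (fromBlocks M C Cᴴ N).det = M.det * (N - P).det := by
      rw [Matrix.det_fromBlocks₁₁, Matrix.invOf_eq_nonsing_inv]
    rw [← h1, hUS, h2]
  have hdM := hM.det_pos
  have hdN := hN.det_pos
  have hdX := hx.det_pos
  have hdE := he.det_pos
  have hdSchur : 0 < (N - P).det := by
    by_contra hcon
    push_neg at hcon
    nlinarith
  constructor
  · intro hlog
    -- from the log equation, get the determinant equation
    have hlogs : Real.log (M.det * N.det) = Real.log (Sx.det * Se.det) := by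
      rw [Real.log_mul hdM.ne' hdN.ne', Real.log_mul hdX.ne' hdE.ne']
      linarith
    have hdets : M.det * N.det = Sx.det * Se.det :=
      Real.log_injOn_pos (Set.mem_Ioi.mpr (mul_pos hdM hdN))
        (Set.mem_Ioi.mpr (mul_pos hdX hdE)) hlogs
    have hNN : N.det = (N - P).det := by
      have : M.det * N.det = M.det * (N - P).det := by rw [hdets, hkey]
      exact mul_left_cancel₀ hdM.ne' this
    have hP0 : P = 0 := by
      refine auxB hSchurPD hPpsd ?_
      rw [sub_add_cancel]
      exact hNN
    have hC0 : C = 0 := auxC hM (by rw [← hPdef]; exact hP0)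
    exact sub_eq_zero.mp (by rw [← hCdef]; exact hC0)
  · intro heq
    have hC0 : C = 0 := by rw [hCdef]; exact sub_eq_zero.mpr heq
    have hP0 : P = 0 := by rw [hPdef, hC0, Matrix.mul_zero]
    have hdets : Sx.det * Se.det = M.det * N.det := by
      rw [hkey, hP0, sub_zero]
    have := Real.log_mul hdX.ne' hdE.ne'
    have h2 := Real.log_mul hdM.ne' hdN.ne'
    have h3 : Real.log (Sx.det * Se.det) = Real.log (M.det * N.det) := by rw [hdets]
    linarith
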